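/- Let f : H → G be a homomorphism of Hilbert algebras. For an upset U of X*(H), define g(U) = {F ∈ X*(G) : every J ∈ X*(H) with f⁻¹(F) ⊆ J satisfies J ∈ U}. Then g(U) is an upset of X*(G) for every upset U of X*(H), and for all upsets U, V of X*(H): g(X*(H)) = X*(G), g(U ∩ V) = g(U) ∩ g(V), g(U ∪ V) = g(U) ∪ g(V), and g(U ⇒ V) = g(U) ⇒ g(V). -/

import Mathlib

/-- A Hilbert algebra `(H, →, 1)`. -/
structure HilbertAlgebra (H : Type*) where
  imp : H → H → H
  one : H
  ax1 : ∀ a b : H, imp a (imp b a) = one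
  ax2 : ∀ a b c : H, imp (imp a (imp b c)) (imp (imp a b) (imp a c)) = one
  ax3 : ∀ a b : H, imp a b = one → imp b a = one → a = b

namespace HilbertAlgebra

variable {H : Type*} (hH : HilbertAlgebra H)

/-- The natural order: `a ≤ b` iff `a → b = 1`. -/
def le (a b : H) : Prop := hH.imp a b = hH.one

/-- Implicative filter. -/
def IsImplicativeFilter (F : Set H) : Prop :=
  hH.one ∈ F ∧ ∀ a b : H, a ∈ F → hH.imp a b ∈ F → b ∈ F

/-- Irreducible implicative filter. -/
def IsIrreducible (F : Set H) : Prop :=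
  hH.IsImplicativeFilter F ∧ F ≠ Set.univ ∧
    ∀ F₁ F₂ : Set H, hH.IsImplicativeFilter F₁ → hH.IsImplicativeFilter F₂ →
      F = F₁ ∩ F₂ → (F = F₁ ∨ F = F₂)

/-- Order-ideal: nonempty, downward closed, up-directed (w.r.t. the natural order). -/
def IsOrderIdeal (I : Set H) : Prop :=
  I.Nonempty ∧ (∀ a b : H, b ∈ I → hH.le a b → a ∈ I) ∧
    ∀ a b : H, a ∈ I → b ∈ I → ∃ c ∈ I, hH.le a c ∧ hH.le b c

/-- `φ(a) = {P ∈ X(H) : a ∈ P}`. -/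
def phi (a : H) : Set (Set H) := {P | hH.IsIrreducible P ∧ a ∈ P}

/-- An upset of `X(H)` (the poset of irreducible implicative filters, ordered by `⊆`). -/
def IsUpsetX (U : Set (Set H)) : Prop :=
  (∀ P ∈ U, hH.IsIrreducible P) ∧
    ∀ P Q : Set H, P ∈ U → hH.IsIrreducible Q → P ⊆ Q → Q ∈ U

/-- The Heyting implication `U ⇒ V` on upsets of `X(H)`. -/
def impUps (U V : Set (Set H)) : Set (Set H) :=
  {P | hH.IsIrreducible P ∧ ∀ Q : Set H, hH.IsIrreducible Q → P ⊆ Q → Q ∈ U → Q ∈ V}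

/-- `FC(H)`: finite nonempty intersections of sets of the form `φ(a)`. -/
def FC : Set (Set (Set H)) :=
  {U | ∃ l : List H, l ≠ [] ∧ U = ⋂ a ∈ l, hH.phi a}

/-- `X*(H)`: implicative filters that are intersections of finitely many (at least one)
irreducible implicative filters. -/
def XStar : Set (Set H) :=
  {F | ∃ S : Set (Set H), S.Finite ∧ S.Nonempty ∧ (∀ P ∈ S, hH.IsIrreducible P) ∧ F = ⋂₀ S}

/-- `Φ(a) = {F ∈ X*(H) : a ∈ F}`. -/
def Phi (a : H) : Set (Set H) := {F | F ∈ hH.XStar ∧ a ∈ F}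

/-- An upset of `X*(H)` (ordered by `⊆`). -/
def IsUpsetXStar (U : Set (Set H)) : Prop :=
  (∀ F ∈ U, F ∈ hH.XStar) ∧
    ∀ F K : Set H, F ∈ U → K ∈ hH.XStar → F ⊆ K → K ∈ U

/-- The implication `U ⇒ V` on upsets of `X*(H)`. -/
def impUpsStar (U V : Set (Set H)) : Set (Set H) :=
  {F | F ∈ hH.XStar ∧ ∀ K : Set H, K ∈ hH.XStar → F ⊆ K → K ∈ U → K ∈ V}

/-- Homomorphism of Hilbert algebras. -/
def IsHom {G : Type*} (hG : HilbertAlgebra G) (f : H → G) : Prop :=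
  f hH.one = hG.one ∧ ∀ a b : H, f (hH.imp a b) = hG.imp (f a) (f b)

end HilbertAlgebra

/-- A Hilbert algebra with supremum: `(H, ∨)` is a join-semilattice whose induced
order has greatest element `1`, and `a → b = 1` iff `a ∨ b = b`. -/
structure HilbertSup (H : Type*) extends HilbertAlgebra H where
  sup : H → H → H
  sup_comm : ∀ a b : H, sup a b = sup b a
  sup_assoc : ∀ a b c : H, sup (sup a b) c = sup a (sup b c)
  sup_idem : ∀ a : H, sup a a = a
  sup_one : ∀ a : H, sup a one = one
  imp_eq_one_iff : ∀ a b : H, imp a b = one ↔ sup a b = b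

/-- Morphism of Hilbert algebras with supremum. -/
def HilbertSup.IsHomSup {H G : Type*} (hH : HilbertSup H) (hG : HilbertSup G)
    (f : H → G) : Prop :=
  hH.toHilbertAlgebra.IsHom hG.toHilbertAlgebra f ∧
    ∀ a b : H, f (hH.sup a b) = hG.sup (f a) (f b)

/-- An implicative semilattice: a meet-semilattice with greatest element and a binary
operation `him` such that `a ⊓ b ≤ c ↔ a ≤ him b c`. -/
class ImplicativeSemilattice (G : Type*) extends SemilatticeInf G, OrderTop G where
  him : G → G → G
  inf_le_iff_le_him : ∀ a b c : G, a ⊓ b ≤ c ↔ a ≤ him b c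

/-- `g(U) = {F ∈ X*(G) : every J ∈ X*(H) with f⁻¹(F) ⊆ J satisfies J ∈ U}`. -/
def gstar {H G : Type*} (hH : HilbertAlgebra H) (hG : HilbertAlgebra G) (f : H → G)
    (U : Set (Set H)) : Set (Set G) :=
  {F | F ∈ hG.XStar ∧ ∀ J : Set H, J ∈ hH.XStar → f ⁻¹' F ⊆ J → J ∈ U}

namespace HAux

variable {H : Type*} (h : HilbertAlgebra H)

lemma eq_one {x : H} (hx : h.imp h.one x = h.one) : x = h.one := by
  have k := h.ax1 x h.one
  rw [hx] at k
  exact h.ax3 x h.one k hx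

lemma imp_self' (a : H) : h.imp a a = h.one := by
  have s := h.ax2 a (h.imp a a) a
  rw [h.ax1 a (h.imp a a)] at s
  have s2 := eq_one h s
  rw [h.ax1 a a] at s2
  exact eq_one h s2

lemma imp_one' (a : H) : h.imp a h.one = h.one :=
  eq_one h (h.ax1 h.one a)

lemma one_imp' (a : H) : h.imp h.one a = a := by
  set u := h.imp h.one a with hu
  have s := h.ax2 u h.one a
  have h1 : h.imp u (h.imp h.one a) = h.one := by rw [← hu]; exact imp_self' h u
  rw [h1, imp_one' h u] at s
  have s2 := eq_one h s
  have s3 := eq_one h s2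
  exact h.ax3 u a s3 (by rw [hu]; exact h.ax1 a h.one)

lemma le_trans' {a b c : H} (hab : h.imp a b = h.one) (hbc : h.imp b c = h.one) :
    h.imp a c = h.one := by
  have s := h.ax2 a b c
  rw [hbc, imp_one' h a] at s
  have s2 := eq_one h s
  rw [hab, one_imp' h] at s2
  exact s2

lemma mono' {a b c : H} (hbc : h.imp b c = h.one) :
    h.imp (h.imp a b) (h.imp a c) = h.one := by
  have s := h.ax2 a b c
  rw [hbc, imp_one' h a] at s
  exact eq_one h s

lemma exchange {a b c : H} (habc : h.imp a (h.imp b c) = h.one) :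
    h.imp b (h.imp a c) = h.one := by
  have s := h.ax2 a b c
  rw [habc, one_imp' h] at s
  exact le_trans' h (h.ax1 b a) s

lemma assertion (a c : H) : h.imp a (h.imp (h.imp a c) c) = h.one :=
  exchange h (imp_self' h (h.imp a c))

lemma filt_upset {F : Set H} (hF : h.IsImplicativeFilter F) {a b : H}
    (ha : a ∈ F) (hab : h.imp a b = h.one) : b ∈ F :=
  hF.2 a b ha (hab ▸ hF.1)

lemma filt_ext {F : Set H} (hF : h.IsImplicativeFilter F) (a : H) :
    h.IsImplicativeFilter {x | h.imp a x ∈ F} := by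
  constructor
  · show h.imp a h.one ∈ F
    rw [imp_one' h]; exact hF.1
  · intro x y hx hxy
    have s : h.imp a (h.imp x y) ∈ F := hxy
    have key := h.ax2 a x y
    have h2 : h.imp (h.imp a x) (h.imp a y) ∈ F := hF.2 _ _ s (key ▸ hF.1)
    exact hF.2 _ _ hx h2

lemma filt_ext_subset {F : Set H} (hF : h.IsImplicativeFilter F) (a : H) :
    F ⊆ {x | h.imp a x ∈ F} := fun p hp =>
  filt_upset h hF hp (h.ax1 p a)

lemma filt_ext_self {F : Set H} (hF : h.IsImplicativeFilter F) (a : H) :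
    a ∈ {x | h.imp a x ∈ F} := by
  show h.imp a a ∈ F
  rw [imp_self' h]; exact hF.1

end HAux
namespace HAux

variable {H : Type*} (h : HilbertAlgebra H)

/-- iterated implication `l₁ → (l₂ → ... → x)` -/
def imps (l : List H) (x : H) : H := l.foldr h.imp x

@[simp] lemma imps_nil (x : H) : imps h [] x = x := rfl
@[simp] lemma imps_cons (q : H) (l : List H) (x : H) :
    imps h (q :: l) x = h.imp q (imps h l x) := rfl

lemma imps_append (l l' : List H) (x : H) :
    imps h (l ++ l') x = imps h l (imps h l' x) := by
  simp [imps, List.foldr_append]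

lemma imps_mono {x y : H} (l : List H) (hxy : h.imp x y = h.one) :
    h.imp (imps h l x) (imps h l y) = h.one := by
  induction l with
  | nil => simpa using hxy
  | cons q l ih => simpa using mono' h ih

lemma le_imps (l : List H) (x : H) : h.imp x (imps h l x) = h.one := by
  induction l with
  | nil => simp [imp_self']
  | cons q l ih => exact le_trans' h ih (h.ax1 (imps h l x) q)

lemma imps_S (l : List H) (x y : H) :
    h.imp (imps h l (h.imp x y)) (h.imp (imps h l x) (imps h l y)) = h.one := by
  induction l with
  | nil => simp [imp_self']
  | cons q l ih =>
    simp only [imps_cons]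
    exact le_trans' h (mono' h ih) (h.ax2 q (imps h l x) (imps h l y))

lemma Dl_filter {F : Set H} (hF : h.IsImplicativeFilter F) (l : List H) :
    h.IsImplicativeFilter {x | imps h l x ∈ F} := by
  constructor
  · exact filt_upset h hF hF.1 (le_imps h l h.one)
  · intro x y hx hxy
    have h1 : h.imp (imps h l x) (imps h l y) ∈ F :=
      filt_upset h hF hxy (imps_S h l x y)
    exact hF.2 _ _ hx h1

lemma imps_mem {Q : Set H} (hQ : h.IsImplicativeFilter Q) {l : List H} {x : H}
    (hl : ∀ q ∈ l, q ∈ Q) (hx : imps h l x ∈ Q) : x ∈ Q := by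
  induction l with
  | nil => exact hx
  | cons q l ih =>
    exact ih (fun p hp => hl p (List.mem_cons_of_mem q hp))
      (hQ.2 q (imps h l x) (hl q (List.mem_cons_self (a := q) (l := l))) hx)

lemma imps_map {G : Type*} {hG : HilbertAlgebra G} {f : H → G}
    (hf : h.IsHom hG f) (l : List H) (a : H) :
    f (imps h l a) = imps hG (l.map f) (f a) := by
  induction l with
  | nil => rfl
  | cons q l ih => simp [hf.2, ih]

end HAux
namespace HAux

variable {H G : Type*} (h : HilbertAlgebra H) (hG : HilbertAlgebra G)

/-- Filter of `G` generated by `F ∪ f '' Q`. -/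
def genD (f : H → G) (F : Set G) (Q : Set H) : Set G :=
  {x | ∃ l : List H, (∀ q ∈ l, q ∈ Q) ∧ imps hG (l.map f) x ∈ F}

lemma genD_sub {f : H → G} {F : Set G} {Q : Set H} : F ⊆ genD hG f F Q :=
  fun x hx => ⟨[], by simp, hx⟩

lemma genD_mem_f {f : H → G} {F : Set G} {Q : Set H}
    (hF : hG.IsImplicativeFilter F) {q : H} (hq : q ∈ Q) : f q ∈ genD hG f F Q :=
  ⟨[q], by simpa using hq, by simpa [imps, imp_self'] using hF.1⟩

lemma genD_filter {f : H → G} {F : Set G} {Q : Set H}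
    (hF : hG.IsImplicativeFilter F) : hG.IsImplicativeFilter (genD hG f F Q) := by
  constructor
  · exact ⟨[], by simp, hF.1⟩
  · rintro x y ⟨l₁, hl₁, hx⟩ ⟨l₂, hl₂, hxy⟩
    refine ⟨l₂ ++ l₁, ?_, ?_⟩
    · intro q hq
      rcases List.mem_append.1 hq with hq | hq
      · exact hl₂ q hq
      · exact hl₁ q hq
    · rw [List.map_append, imps_append]
      set A := l₂.map f
      set B := l₁.map f
      have hDl := Dl_filter hG hF A
      have h1 : imps hG A (imps hG B x) ∈ F :=
        filt_upset hG hF hx (le_imps hG A (imps hG B x))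
      have h2 : imps hG A (hG.imp (imps hG B x) (imps hG B y)) ∈ F :=
        filt_upset hG hF hxy (imps_mono hG A (le_trans' hG (le_imps hG B (hG.imp x y)) (imps_S hG B x y)))
      exact hDl.2 _ _ h1 h2

lemma genD_pre {f : H → G} {F : Set G} {Q : Set H}
    (hf : h.IsHom hG f) (hQ : h.IsImplicativeFilter Q)
    (hsub : f ⁻¹' F ⊆ Q) : f ⁻¹' (genD hG f F Q) ⊆ Q := by
  rintro a ⟨l, hl, himp⟩
  rw [← imps_map h hf] at himp
  exact imps_mem h hQ hl (hsub himp)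

lemma compl_directed {Q : Set H} (hQ : h.IsIrreducible Q) {a b : H}
    (ha : a ∉ Q) (hb : b ∉ Q) :
    ∃ c, c ∉ Q ∧ h.imp a c = h.one ∧ h.imp b c = h.one := by
  obtain ⟨hQf, hQu, hQi⟩ := hQ
  set F₁ : Set H := {x | h.imp a x ∈ Q}
  set F₂ : Set H := {x | h.imp b x ∈ Q}
  have hne : Q ≠ F₁ ∩ F₂ := by
    intro heq
    rcases hQi F₁ F₂ (filt_ext h hQf a) (filt_ext h hQf b) heq with h1 | h1
    · exact ha (h1 ▸ filt_ext_self h hQf a)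
    · exact hb (h1 ▸ filt_ext_self h hQf b)
  have hsub : Q ⊆ F₁ ∩ F₂ := fun p hp =>
    ⟨filt_ext_subset h hQf a hp, filt_ext_subset h hQf b hp⟩
  have : ∃ c₀, c₀ ∈ F₁ ∩ F₂ ∧ c₀ ∉ Q := by
    by_contra hc
    push_neg at hc
    exact hne (Set.Subset.antisymm hsub (fun x hx => hc x hx))
  obtain ⟨c₀, ⟨hc1, hc2⟩, hc0⟩ := this
  refine ⟨h.imp (h.imp a c₀) (h.imp (h.imp b c₀) c₀), ?_, ?_, ?_⟩
  · intro hd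
    have := hQf.2 _ _ hc1 hd
    exact hc0 (hQf.2 _ _ hc2 this)
  · -- a ≤ (a→c₀)→((b→c₀)→c₀)
    exact le_trans' h (assertion h a c₀) (mono' h (h.ax1 c₀ (h.imp b c₀)))
  · -- b ≤ (b→c₀)→c₀ ≤ (a→c₀)→((b→c₀)→c₀)
    exact le_trans' h (assertion h b c₀) (h.ax1 (h.imp (h.imp b c₀) c₀) (h.imp a c₀))

end HAux
namespace HAux

variable {H : Type*} (h : HilbertAlgebra H)

lemma separation {D I : Set H} (hD : h.IsImplicativeFilter D) (hne : I.Nonempty)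
    (hdir : ∀ i ∈ I, ∀ j ∈ I, ∃ k ∈ I, h.imp i k = h.one ∧ h.imp j k = h.one)
    (hdisj : ∀ x ∈ D, x ∉ I) :
    ∃ P, h.IsIrreducible P ∧ D ⊆ P ∧ ∀ x ∈ P, x ∉ I := by
  set S : Set (Set H) := {E | h.IsImplicativeFilter E ∧ D ⊆ E ∧ ∀ x ∈ E, x ∉ I}
  have hzorn : ∀ c ⊆ S, IsChain (· ⊆ ·) c → c.Nonempty → ∃ ub ∈ S, ∀ s ∈ c, s ⊆ ub := by
    intro c hc hchain ⟨E₀, hE₀⟩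
    refine ⟨⋃₀ c, ⟨⟨?_, ?_⟩, ?_, ?_⟩, fun s hs => Set.subset_sUnion_of_mem hs⟩
    · exact ⟨E₀, hE₀, (hc hE₀).1.1⟩
    · rintro a b ⟨E₁, hE₁, haE⟩ ⟨E₂, hE₂, habE⟩
      rcases hchain.total hE₁ hE₂ with hle | hle
      · exact ⟨E₂, hE₂, (hc hE₂).1.2 a b (hle haE) habE⟩
      · exact ⟨E₁, hE₁, (hc hE₁).1.2 a b haE (hle habE)⟩
    · exact (hc hE₀).2.1.trans (Set.subset_sUnion_of_mem hE₀)
    · rintro x ⟨E₁, hE₁, hx⟩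
      exact (hc hE₁).2.2 x hx
  obtain ⟨P, hDP, hPmax⟩ := zorn_subset_nonempty S hzorn D ⟨hD, le_refl D, hdisj⟩
  obtain ⟨hPf, hDP', hPI⟩ := hPmax.1
  obtain ⟨i0, hi0⟩ := hne
  refine ⟨P, ⟨hPf, ?_, ?_⟩, hDP', hPI⟩
  · intro hP
    exact hPI i0 (hP ▸ Set.mem_univ i0) hi0
  · intro F₁ F₂ hF₁ hF₂ heq
    by_contra hcon
    push_neg at hcon
    obtain ⟨hne1, hne2⟩ := hcon
    have hsub1 : P ⊆ F₁ := heq ▸ Set.inter_subset_left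
    have hsub2 : P ⊆ F₂ := heq ▸ Set.inter_subset_right
    obtain ⟨a, haF, haP⟩ : ∃ a, a ∈ F₁ ∧ a ∉ P := by
      by_contra hc; push_neg at hc
      exact hne1 (Set.Subset.antisymm hsub1 hc)
    obtain ⟨b, hbF, hbP⟩ : ∃ b, b ∈ F₂ ∧ b ∉ P := by
      by_contra hc; push_neg at hc
      exact hne2 (Set.Subset.antisymm hsub2 hc)
    -- the extension of P by a must meet I
    have hmeet : ∀ x, x ∉ P → ∃ i ∈ I, h.imp x i ∈ P := by
      intro x hxP
      by_contra hc; push_neg at hc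
      have hmem : {y | h.imp x y ∈ P} ∈ S := by
        refine ⟨filt_ext h hPf x, hDP'.trans (filt_ext_subset h hPf x), ?_⟩
        intro y hy hyI
        exact hc y hyI hy
      have := hPmax.2 hmem (filt_ext_subset h hPf x)
      exact hxP (this (filt_ext_self h hPf x))
    obtain ⟨i, hiI, hai⟩ := hmeet a haP
    obtain ⟨j, hjI, hbj⟩ := hmeet b hbP
    obtain ⟨k, hkI, hik, hjk⟩ := hdir i hiI j hjI
    have hak : h.imp a k ∈ P := filt_upset h hPf hai (mono' h hik)
    have hbk : h.imp b k ∈ P := filt_upset h hPf hbj (mono' h hjk)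
    have hk1 : k ∈ F₁ := hF₁.2 a k haF (hsub1 hak)
    have hk2 : k ∈ F₂ := hF₂.2 b k hbF (hsub2 hbk)
    have : k ∈ P := heq ▸ ⟨hk1, hk2⟩
    exact hPI k this hkI

end HAux
namespace HAux

variable {H G : Type*} (h : HilbertAlgebra H) (hG : HilbertAlgebra G)

lemma hom_mono {f : H → G} (hf : h.IsHom hG f) {a b : H}
    (hab : h.imp a b = h.one) : hG.imp (f a) (f b) = hG.one := by
  rw [← hf.2, hab, hf.1]

/-- Key lemma (irreducible case): if `F` is a filter of `G`, `Q` irreducible in `H`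
and `f⁻¹F ⊆ Q`, then there is an irreducible `P ⊇ F` with `f⁻¹P = Q`. -/
lemma key1 {f : H → G} (hf : h.IsHom hG f) {F : Set G} {Q : Set H}
    (hF : hG.IsImplicativeFilter F) (hQ : h.IsIrreducible Q)
    (hsub : f ⁻¹' F ⊆ Q) :
    ∃ P, hG.IsIrreducible P ∧ F ⊆ P ∧ f ⁻¹' P = Q := by
  set D := genD hG f F Q with hD
  set I : Set G := f '' Qᶜ with hI
  have hQf := hQ.1
  have hDfil : hG.IsImplicativeFilter D := genD_filter hG hF
  have hDpre : f ⁻¹' D ⊆ Q := genD_pre h hG hf hQf hsub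
  have hIne : I.Nonempty := by
    have : Qᶜ.Nonempty := Set.nonempty_compl.2 hQ.2.1
    exact this.image f
  have hdir : ∀ i ∈ I, ∀ j ∈ I, ∃ k ∈ I, hG.imp i k = hG.one ∧ hG.imp j k = hG.one := by
    rintro _ ⟨a, ha, rfl⟩ _ ⟨b, hb, rfl⟩
    obtain ⟨c, hc, hac, hbc⟩ := compl_directed h hQ ha hb
    exact ⟨f c, ⟨c, hc, rfl⟩, hom_mono h hG hf hac, hom_mono h hG hf hbc⟩
  have hdisj : ∀ x ∈ D, x ∉ I := by
    rintro x hx ⟨a, ha, rfl⟩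
    exact ha (hDpre hx)
  obtain ⟨P, hPirr, hDP, hPI⟩ := separation hG hDfil hIne hdir hdisj
  refine ⟨P, hPirr, (genD_sub hG).trans hDP, ?_⟩
  apply Set.Subset.antisymm
  · intro a haP
    by_contra haQ
    exact hPI (f a) haP ⟨a, haQ, rfl⟩
  · intro q hq
    exact hDP (genD_mem_f hG hF hq)

lemma xstar_filter {F : Set H} (hF : F ∈ h.XStar) : h.IsImplicativeFilter F := by
  obtain ⟨S, hfin, ⟨E0, hE0⟩, hirr, rfl⟩ := hF
  constructor
  · exact fun E hE => (hirr E hE).1.1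
  · intro a b ha hab E hE
    exact (hirr E hE).1.2 a b (ha E hE) (hab E hE)

lemma xstar_inter {F K : Set H} (hF : F ∈ h.XStar) (hK : K ∈ h.XStar) :
    F ∩ K ∈ h.XStar := by
  obtain ⟨S1, hfin1, hne1, hirr1, rfl⟩ := hF
  obtain ⟨S2, hfin2, hne2, hirr2, rfl⟩ := hK
  refine ⟨S1 ∪ S2, hfin1.union hfin2, hne1.mono Set.subset_union_left, ?_, ?_⟩
  · rintro P (hP | hP)
    · exact hirr1 P hP
    · exact hirr2 P hP
  · rw [Set.sInter_union]

/-- Key lemma: if `F ∈ X*(G)`, `K ∈ X*(H)` and `f⁻¹F ⊆ K`, then there is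
`F' ∈ X*(G)` with `F ⊆ F'` and `f⁻¹F' = K`. -/
lemma key2 {f : H → G} (hf : h.IsHom hG f) {F : Set G} {K : Set H}
    (hF : F ∈ hG.XStar) (hK : K ∈ h.XStar) (hsub : f ⁻¹' F ⊆ K) :
    ∃ F', F' ∈ hG.XStar ∧ F ⊆ F' ∧ f ⁻¹' F' = K := by
  have hFfil := xstar_filter hG hF
  obtain ⟨S, hfin, hne, hirr, rfl⟩ := hK
  have hstep : ∀ Q ∈ S, ∃ P, hG.IsIrreducible P ∧ F ⊆ P ∧ f ⁻¹' P = Q := by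
    intro Q hQ
    exact key1 h hG hf hFfil (hirr Q hQ) (hsub.trans (Set.sInter_subset_of_mem hQ))
  choose! P hP1 hP2 hP3 using hstep
  refine ⟨⋂₀ (P '' S), ⟨P '' S, hfin.image P, hne.image P, ?_, rfl⟩, ?_, ?_⟩
  · rintro _ ⟨Q, hQ, rfl⟩
    exact hP1 Q hQ
  · intro x hx
    rintro _ ⟨Q, hQ, rfl⟩
    exact hP2 Q hQ hx
  · rw [Set.sInter_image, Set.preimage_iInter₂]
    ext a
    simp only [Set.mem_iInter, Set.mem_sInter]
    constructor
    · intro ha Q hQ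
      exact (hP3 Q hQ) ▸ ha Q hQ
    · intro ha Q hQ
      rw [hP3 Q hQ]
      exact ha Q hQ

end HAux
theorem stmt_19 {H G : Type*} (hH : HilbertAlgebra H) (hG : HilbertAlgebra G) (f : H → G)
    (hf : hH.IsHom hG f) :
    (∀ U : Set (Set H), hH.IsUpsetXStar U → hG.IsUpsetXStar (gstar hH hG f U)) ∧
    (gstar hH hG f hH.XStar = hG.XStar) ∧
    (∀ U V : Set (Set H), hH.IsUpsetXStar U → hH.IsUpsetXStar V →
      gstar hH hG f (U ∩ V) = gstar hH hG f U ∩ gstar hH hG f V) ∧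
    (∀ U V : Set (Set H), hH.IsUpsetXStar U → hH.IsUpsetXStar V →
      gstar hH hG f (U ∪ V) = gstar hH hG f U ∪ gstar hH hG f V) ∧
    (∀ U V : Set (Set H), hH.IsUpsetXStar U → hH.IsUpsetXStar V →
      gstar hH hG f (hH.impUpsStar U V) = hG.impUpsStar (gstar hH hG f U) (gstar hH hG f V)) := by
  refine ⟨?_, ?_, ?_, ?_, ?_⟩
  · -- g(U) is an upset
    intro U hU
    refine ⟨fun F hF => hF.1, ?_⟩
    rintro F K ⟨hFX, hFall⟩ hKX hFK
    refine ⟨hKX, fun J hJ hKJ => hFall J hJ ((Set.preimage_mono hFK).trans hKJ)⟩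
  · -- g(X*(H)) = X*(G)
    ext F
    exact ⟨fun hF => hF.1, fun hF => ⟨hF, fun J hJ _ => hJ⟩⟩
  · -- g(U ∩ V) = g(U) ∩ g(V)
    intro U V hU hV
    ext F
    constructor
    · rintro ⟨hFX, hFall⟩
      exact ⟨⟨hFX, fun J hJ hJ2 => (hFall J hJ hJ2).1⟩,
             ⟨hFX, fun J hJ hJ2 => (hFall J hJ hJ2).2⟩⟩
    · rintro ⟨⟨hFX, h1⟩, ⟨_, h2⟩⟩
      exact ⟨hFX, fun J hJ hJ2 => ⟨h1 J hJ hJ2, h2 J hJ hJ2⟩⟩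
  · -- g(U ∪ V) = g(U) ∪ g(V)
    intro U V hU hV
    ext F
    constructor
    · rintro ⟨hFX, hFall⟩
      by_contra hcon
      rw [Set.mem_union] at hcon
      push_neg at hcon
      obtain ⟨hnU, hnV⟩ := hcon
      have h1 : ∃ J₁, J₁ ∈ hH.XStar ∧ f ⁻¹' F ⊆ J₁ ∧ J₁ ∉ U := by
        by_contra hc; push_neg at hc
        exact hnU ⟨hFX, fun J hJ hJ2 => hc J hJ hJ2⟩
      have h2 : ∃ J₂, J₂ ∈ hH.XStar ∧ f ⁻¹' F ⊆ J₂ ∧ J₂ ∉ V := by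
        by_contra hc; push_neg at hc
        exact hnV ⟨hFX, fun J hJ hJ2 => hc J hJ hJ2⟩
      obtain ⟨J₁, hJ₁X, hJ₁s, hJ₁U⟩ := h1
      obtain ⟨J₂, hJ₂X, hJ₂s, hJ₂V⟩ := h2
      have hJX : J₁ ∩ J₂ ∈ hH.XStar := HAux.xstar_inter hH hJ₁X hJ₂X
      have hJs : f ⁻¹' F ⊆ J₁ ∩ J₂ := Set.subset_inter hJ₁s hJ₂s
      rcases hFall (J₁ ∩ J₂) hJX hJs with hmem | hmem
      · exact hJ₁U (hU.2 (J₁ ∩ J₂) J₁ hmem hJ₁X Set.inter_subset_left)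
      · exact hJ₂V (hV.2 (J₁ ∩ J₂) J₂ hmem hJ₂X Set.inter_subset_right)
    · rintro (⟨hFX, h1⟩ | ⟨hFX, h1⟩)
      · exact ⟨hFX, fun J hJ hJ2 => Or.inl (h1 J hJ hJ2)⟩
      · exact ⟨hFX, fun J hJ hJ2 => Or.inr (h1 J hJ hJ2)⟩
  · -- g(U ⇒ V) = g(U) ⇒ g(V)
    intro U V hU hV
    ext F
    constructor
    · rintro ⟨hFX, hFall⟩
      refine ⟨hFX, ?_⟩
      rintro K' hK'X hFK' ⟨_, hK'U⟩
      refine ⟨hK'X, ?_⟩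
      intro J hJX hJ2
      have hFJ : f ⁻¹' F ⊆ J := (Set.preimage_mono hFK').trans hJ2
      obtain ⟨hJX', hJimp⟩ := hFall J hJX hFJ
      exact hJimp J hJX (le_refl J) (hK'U J hJX hJ2)
    · rintro ⟨hFX, hFall⟩
      refine ⟨hFX, ?_⟩
      intro J hJX hFJ
      refine ⟨hJX, ?_⟩
      intro K hKX hJK hKU
      have hFK : f ⁻¹' F ⊆ K := hFJ.trans hJK
      obtain ⟨F', hF'X, hFF', hF'pre⟩ := HAux.key2 hH hG hf hFX hKX hFK
      have hF'gU : F' ∈ gstar hH hG f U := by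
        refine ⟨hF'X, ?_⟩
        intro J' hJ'X hJ's
        rw [hF'pre] at hJ's
        exact hU.2 K J' hKU hJ'X hJ's
      have hF'gV := hFall F' hF'X hFF' hF'gU
      exact hF'gV.2 K hKX (le_of_eq hF'pre)
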